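/- Let O_n be the poset of surjections f:{1,…,n}→{1,…,k(f)} with f ⪯ g iff g = h∘f for some non-decreasing h. For 𝐧=(n₁,…,n_l)∈Seq(n), the subposet O_𝐧 = {f : f ⪯ f_𝐧} is isomorphic to the product poset O_{n₁}×⋯×O_{n_l}. -/

import Mathlib

/-- The poset `O_n` of surjections `f : {1,…,n} → {1,…,k}` (here
`Fin n → Fin (k+1)`, so the codomain is nonempty). -/
def O (n : ℕ) := Σ k : ℕ, {f : Fin n → Fin (k + 1) // Function.Surjective f}

/-- The order on `O_n`: `f ⪯ g` iff `g = h ∘ f` for a non-decreasing `h`. -/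
def Ole {n : ℕ} (a b : O n) : Prop :=
  ∃ h : Fin (a.1 + 1) → Fin (b.1 + 1), Monotone h ∧ b.2.1 = h ∘ a.2.1

namespace S12
open Finset

variable {N M L : ℕ}

/-- fiber card -/
def fc (g : Fin N → Fin M) (t : Fin M) : ℕ := (univ.filter fun x => g x = t).card

/-- stacked offsets -/
def stc (c : Fin M → ℕ) (t : Fin M) : ℕ := ∑ s ∈ Iio t, c s

lemma stc_add (c : Fin M → ℕ) (t : Fin M) : stc c t + c t = ∑ s ∈ Iic t, c s := by
  rw [← Finset.Iio_insert, Finset.sum_insert (by simp), add_comm]; rfl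

lemma stc_add_le_of_lt (c : Fin M → ℕ) {t t' : Fin M} (h : t < t') :
    stc c t + c t ≤ stc c t' := by
  rw [stc_add]
  exact Finset.sum_le_sum_of_subset (fun s hs => by
    simp only [mem_Iic] at hs; simp only [mem_Iio]; exact lt_of_le_of_lt hs h)

lemma stc_add_le_sum (c : Fin M → ℕ) (t : Fin M) : stc c t + c t ≤ ∑ s, c s := by
  rw [stc_add]; exact Finset.sum_le_sum_of_subset (by simp)

lemma sum_fc (g : Fin N → Fin M) : ∑ t, fc g t = N := by
  have := Finset.card_eq_sum_card_fiberwise (s := (univ : Finset (Fin N)))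
    (t := (univ : Finset (Fin M))) (f := g) (fun x _ => mem_univ _)
  simpa [fc] using this.symm

lemma mem_downclosed {s : Finset (Fin N)} (hdc : ∀ x ∈ s, ∀ y, y ≤ x → y ∈ s) (x : Fin N) :
    x ∈ s ↔ x.val < s.card := by
  constructor
  · intro hx
    by_contra hlt
    push_neg at hlt
    have h1 : Finset.Iic x ⊆ s := fun y hy => hdc x hx y (mem_Iic.mp hy)
    have h2 := Finset.card_le_card h1
    rw [Fin.card_Iic] at h2
    omega
  · intro hx
    by_contra hxs
    have h1 : s ⊆ Finset.Iio x := by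
      intro y hy
      rw [mem_Iio]
      rcases lt_or_ge y x with h | h
      · exact h
      · exact absurd (hdc y hy x h) hxs
    have h2 := Finset.card_le_card h1
    rw [Fin.card_Iio] at h2
    omega

lemma lt_iff_of_mono {g : Fin N → Fin M} (hg : Monotone g) (t : Fin M) (x : Fin N) :
    g x < t ↔ x.val < stc (fc g) t := by
  have hdc : ∀ y ∈ univ.filter (fun z => g z < t), ∀ z, z ≤ y →
      z ∈ univ.filter (fun z => g z < t) := by
    intro y hy z hz
    simp only [mem_filter, mem_univ, true_and] at *
    exact lt_of_le_of_lt (hg hz) hy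
  have hcard : (univ.filter (fun z => g z < t)).card = stc (fc g) t := by
    rw [Finset.card_eq_sum_card_fiberwise (t := Finset.Iio t) (f := g)
      (fun y hy => by simp only [mem_coe, mem_filter] at hy; simpa using hy.2)]
    refine Finset.sum_congr rfl fun b hb => ?_
    simp only [mem_Iio] at hb
    congr 1
    ext z
    simp only [mem_filter, mem_univ, true_and, and_iff_right_iff_imp]
    intro h; rw [h]; exact hb
  rw [← hcard, ← mem_downclosed hdc x]
  simp

lemma le_iff_of_mono {g : Fin N → Fin M} (hg : Monotone g) (t : Fin M) (x : Fin N) :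
    g x ≤ t ↔ x.val < stc (fc g) t + fc g t := by
  have hdc : ∀ y ∈ univ.filter (fun z => g z ≤ t), ∀ z, z ≤ y →
      z ∈ univ.filter (fun z => g z ≤ t) := by
    intro y hy z hz
    simp only [mem_filter, mem_univ, true_and] at *
    exact le_trans (hg hz) hy
  have hcard : (univ.filter (fun z => g z ≤ t)).card = stc (fc g) t + fc g t := by
    rw [Finset.card_eq_sum_card_fiberwise (t := Finset.Iic t) (f := g)
      (fun y hy => by simp only [mem_coe, mem_filter] at hy; simpa using hy.2), stc_add]
    refine Finset.sum_congr rfl fun b hb => ?_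
    simp only [mem_Iic] at hb
    congr 1
    ext z
    simp only [mem_filter, mem_univ, true_and, and_iff_right_iff_imp]
    intro h; rw [h]; exact hb
  rw [← hcard, ← mem_downclosed hdc x]
  simp

lemma eq_iff_of_mono {g : Fin N → Fin M} (hg : Monotone g) (t : Fin M) (x : Fin N) :
    g x = t ↔ stc (fc g) t ≤ x.val ∧ x.val < stc (fc g) t + fc g t := by
  constructor
  · rintro rfl
    constructor
    · have := (lt_iff_of_mono hg (g x) x).not.mp (lt_irrefl _); omega
    · exact (le_iff_of_mono hg (g x) x).mp le_rfl
  · rintro ⟨h1, h2⟩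
    have hle := (le_iff_of_mono hg t x).mpr h2
    have hnlt := (lt_iff_of_mono hg t x).not.mpr (by omega)
    push_neg at hnlt
    exact le_antisymm hle hnlt


lemma fc_pos {g : Fin N → Fin M} (hs : Function.Surjective g) (t : Fin M) : 0 < fc g t := by
  obtain ⟨x, hx⟩ := hs t
  exact Finset.card_pos.mpr ⟨x, by simp [hx]⟩

lemma stc_zero (c : Fin (L+1) → ℕ) : stc c 0 = 0 := by
  have : Finset.Iio (0 : Fin (L+1)) = ∅ := by
    ext s; simp
  simp [stc, this]

/-- locate: which block a value falls in -/
def loc (c : Fin (L+1) → ℕ) (x : ℕ) : Fin (L+1) :=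
  (univ.filter fun t => stc c t ≤ x).max' ⟨0, by simp [stc_zero]⟩

lemma loc_le (c : Fin (L+1) → ℕ) (x : ℕ) : stc c (loc c x) ≤ x := by
  have := Finset.max'_mem (univ.filter fun t => stc c t ≤ x) ⟨0, by simp [stc_zero]⟩
  exact (Finset.mem_filter.mp this).2

lemma interval_unique (c : Fin (L+1) → ℕ) {x : ℕ} {t t' : Fin (L+1)}
    (h1 : stc c t ≤ x) (h2 : x < stc c t + c t)
    (h1' : stc c t' ≤ x) (h2' : x < stc c t' + c t') : t = t' := by
  rcases lt_trichotomy t t' with h | h | h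
  · have := stc_add_le_of_lt c h; omega
  · exact h
  · have := stc_add_le_of_lt c h; omega

lemma loc_eq (c : Fin (L+1) → ℕ) {x : ℕ} {t : Fin (L+1)}
    (h1 : stc c t ≤ x) (h2 : x < stc c t + c t) : loc c x = t := by
  have hmem : t ∈ univ.filter fun s => stc c s ≤ x := by simpa using h1
  have hle : t ≤ loc c x := Finset.le_max' _ t hmem
  rcases eq_or_lt_of_le hle with h | h
  · exact h.symm
  · exfalso
    have h3 := stc_add_le_of_lt c h
    have h4 := loc_le c x
    omega

lemma loc_spec (c : Fin (L+1) → ℕ) {x : ℕ} (hx : x < ∑ t, c t) :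
    stc c (loc c x) ≤ x ∧ x < stc c (loc c x) + c (loc c x) := by
  refine ⟨loc_le c x, ?_⟩
  by_contra hc
  push_neg at hc
  by_cases hl : loc c x = Fin.last L
  · rw [hl] at hc
    have : stc c (Fin.last L) + c (Fin.last L) = ∑ t, c t := by
      rw [stc_add]
      congr 1
      ext s; simp [Fin.le_last]
    omega
  · have hlt : (loc c x).val < L := by
      have := (loc c x).isLt
      have : (loc c x).val ≠ L := fun h => hl (Fin.ext h)
      omega
    set t' : Fin (L+1) := ⟨(loc c x).val + 1, by omega⟩ with ht'
    have hIio : Finset.Iio t' = Finset.Iic (loc c x) := by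
      ext s
      simp only [mem_Iio, mem_Iic, Fin.lt_def, Fin.le_def, ht']
      omega
    have hst : stc c t' = stc c (loc c x) + c (loc c x) := by
      rw [stc, hIio, ← stc_add]
    have hmem : t' ∈ univ.filter fun s => stc c s ≤ x := by
      simp only [mem_filter, mem_univ, true_and, hst]; omega
    have h5 : t' ≤ loc c x := Finset.le_max' _ t' hmem
    rw [Fin.le_def, ht'] at h5
    simp at h5

lemma card_val_interval {b c : ℕ} (h : b + c ≤ N) :
    ((univ : Finset (Fin N)).filter fun z => b ≤ z.val ∧ z.val < b + c).card = c := by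
  conv_rhs => rw [← Finset.card_range c]
  apply Finset.card_bij' (i := fun z _ => z.val - b)
    (j := fun m hm => (⟨b + m, by simp only [Finset.mem_range] at hm; omega⟩ : Fin N))
  all_goals intro x hx
  all_goals simp only [Finset.mem_range, mem_filter, mem_univ, true_and, Fin.val_mk] at hx ⊢
  all_goals first
    | omega
    | (apply Fin.ext; simp only [Fin.val_mk]; omega)

/-- uniqueness of the monotone factor through a surjection -/
lemma h_unique {A B : Type*} {f : Fin N → A} (hf : Function.Surjective f)
    {h1 h2 : A → B} (he : h1 ∘ f = h2 ∘ f) : h1 = h2 := by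
  funext z
  obtain ⟨i, rfl⟩ := hf z
  exact congrFun he i

lemma O_ext {n : ℕ} {a b : O n} (h1 : a.1 = b.1)
    (h2 : ∀ i, ((a.2.1 i : Fin (a.1+1)) : ℕ) = ((b.2.1 i : Fin (b.1+1)) : ℕ)) : a = b := by
  obtain ⟨k, f⟩ := a
  obtain ⟨k', f'⟩ := b
  dsimp at h1
  subst h1
  congr 1
  exact Subtype.ext (funext fun i => Fin.ext (h2 i))


section Main

variable {n l : ℕ} {dims : Fin (l + 1) → ℕ} {fN : Fin n → Fin (l + 1)}
  {hsurj : Function.Surjective fN}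

/-- the subtype of the statement -/
abbrev Sub (dims : Fin (l + 1) → ℕ) (fN : Fin n → Fin (l + 1))
    (hsurj : Function.Surjective fN) := {f : O n // Ole f ⟨l, fN, hsurj⟩}

lemma fc_fN (hfib : ∀ k, (Finset.univ.filter fun i => fN i = k).card = dims k) :
    fc fN = dims := funext hfib

lemma sum_dims (hfib : ∀ k, (Finset.univ.filter fun i => fN i = k).card = dims k) :
    ∑ t, dims t = n := by rw [← fc_fN hfib]; exact sum_fc fN

lemma stc_dims_le (hfib : ∀ k, (Finset.univ.filter fun i => fN i = k).card = dims k)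
    (t : Fin (l + 1)) : stc dims t + dims t ≤ n := by
  rw [← sum_dims hfib]; rw [← fc_fN hfib]; exact stc_add_le_sum (fc fN) t

lemma fN_eq_iff (hmono : Monotone fN)
    (hfib : ∀ k, (Finset.univ.filter fun i => fN i = k).card = dims k)
    (t : Fin (l + 1)) (i : Fin n) :
    fN i = t ↔ stc dims t ≤ i.val ∧ i.val < stc dims t + dims t := by
  rw [← fc_fN hfib]; exact eq_iff_of_mono hmono t i

noncomputable def hOf (a : Sub dims fN hsurj) : Fin (a.1.1 + 1) → Fin (l + 1) :=
  a.2.choose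

lemma hOf_mono (a : Sub dims fN hsurj) : Monotone (hOf a) := a.2.choose_spec.1

lemma hOf_fac (a : Sub dims fN hsurj) : fN = hOf a ∘ a.1.2.1 := a.2.choose_spec.2

lemma hOf_app (a : Sub dims fN hsurj) (i : Fin n) : hOf a (a.1.2.1 i) = fN i :=
  (congrFun (hOf_fac a) i).symm

lemma hOf_surj (a : Sub dims fN hsurj) : Function.Surjective (hOf a) := by
  intro t
  obtain ⟨i, hi⟩ := hsurj t
  exact ⟨a.1.2.1 i, by rw [hOf_app a i, hi]⟩

lemma fcA_pos (a : Sub dims fN hsurj) (t : Fin (l + 1)) : 0 < fc (hOf a) t :=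
  fc_pos (hOf_surj a) t

lemma sum_fcA (a : Sub dims fN hsurj) : ∑ t, fc (hOf a) t = a.1.1 + 1 := sum_fc (hOf a)

lemma fA_mem (a : Sub dims fN hsurj) (i : Fin n) :
    stc (fc (hOf a)) (fN i) ≤ (a.1.2.1 i).val ∧
      (a.1.2.1 i).val < stc (fc (hOf a)) (fN i) + fc (hOf a) (fN i) :=
  (eq_iff_of_mono (hOf_mono a) _ _).mp (hOf_app a i)

/-- the `j`-th element of the `t`-th fibre of `fN` -/
def idx (hfib : ∀ k, (Finset.univ.filter fun i => fN i = k).card = dims k)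
    (t : Fin (l + 1)) (j : Fin (dims t)) : Fin n :=
  ⟨stc dims t + j.val, by have := stc_dims_le hfib t; have := j.isLt; omega⟩

lemma fN_idx (hmono : Monotone fN)
    (hfib : ∀ k, (Finset.univ.filter fun i => fN i = k).card = dims k)
    (t : Fin (l + 1)) (j : Fin (dims t)) : fN (idx hfib t j) = t := by
  rw [fN_eq_iff hmono hfib]
  simp only [idx]
  have := j.isLt
  omega

lemma FWf_bound (hmono : Monotone fN)
    (hfib : ∀ k, (Finset.univ.filter fun i => fN i = k).card = dims k)
    (a : Sub dims fN hsurj) (t : Fin (l + 1)) (j : Fin (dims t)) :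
    (a.1.2.1 (idx hfib t j)).val - stc (fc (hOf a)) t < fc (hOf a) t - 1 + 1 := by
  have h1 := fA_mem a (idx hfib t j)
  rw [fN_idx hmono hfib] at h1
  have := fcA_pos a t
  omega

/-- forward map -/
noncomputable def FW (hmono : Monotone fN)
    (hfib : ∀ k, (Finset.univ.filter fun i => fN i = k).card = dims k)
    (a : Sub dims fN hsurj) (t : Fin (l + 1)) : O (dims t) :=
  ⟨fc (hOf a) t - 1,
   fun j => ⟨(a.1.2.1 (idx hfib t j)).val - stc (fc (hOf a)) t, FWf_bound hmono hfib a t j⟩,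
   by
    intro y
    have hzb : stc (fc (hOf a)) t + fc (hOf a) t ≤ a.1.1 + 1 := by
      have hs := sum_fcA a
      have h2 := stc_add_le_sum (fc (hOf a)) t
      omega
    have hy : y.val < fc (hOf a) t := by have := y.isLt; have := fcA_pos a t; omega
    set z : Fin (a.1.1 + 1) := ⟨stc (fc (hOf a)) t + y.val, by omega⟩ with hz
    obtain ⟨i, hi⟩ := a.1.2.2 z
    have hzt : hOf a z = t := by
      rw [eq_iff_of_mono (hOf_mono a)]
      simp only [hz]
      omega
    have hft : fN i = t := by rw [← hOf_app a i, hi, hzt]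
    have hint := (fN_eq_iff hmono hfib t i).mp hft
    refine ⟨⟨i.val - stc dims t, by omega⟩, ?_⟩
    have hidx : idx hfib t ⟨i.val - stc dims t, by omega⟩ = i := by
      apply Fin.ext; simp only [idx]; omega
    apply Fin.ext
    simp only [hidx, hi, hz]
    omega⟩


/-- block sizes of the glued surjection -/
def cG (G : ∀ t : Fin (l + 1), O (dims t)) (t : Fin (l + 1)) : ℕ := (G t).1 + 1

lemma sum_cG (G : ∀ t : Fin (l + 1), O (dims t)) :
    ∑ t, cG G t = l + ∑ t, (G t).1 + 1 := by
  simp only [cG, Finset.sum_add_distrib, Finset.sum_const, Finset.card_univ,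
    Fintype.card_fin, smul_eq_mul, mul_one]
  omega

lemma idx_sub_lt (hmono : Monotone fN)
    (hfib : ∀ k, (Finset.univ.filter fun i => fN i = k).card = dims k)
    (i : Fin n) : i.val - stc dims (fN i) < dims (fN i) := by
  have := (fN_eq_iff hmono hfib (fN i) i).mp rfl
  omega

lemma IVf_bound (hmono : Monotone fN)
    (hfib : ∀ k, (Finset.univ.filter fun i => fN i = k).card = dims k)
    (G : ∀ t : Fin (l + 1), O (dims t)) (i : Fin n) :
    stc (cG G) (fN i) +
      ((G (fN i)).2.1 ⟨i.val - stc dims (fN i), idx_sub_lt hmono hfib i⟩).val <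
      l + ∑ t, (G t).1 + 1 := by
  have h1 := stc_add_le_sum (cG G) (fN i)
  rw [sum_cG] at h1
  have h2 := ((G (fN i)).2.1 ⟨i.val - stc dims (fN i), idx_sub_lt hmono hfib i⟩).isLt
  simp only [cG] at h1
  omega

/-- the glued function -/
def IVf (hmono : Monotone fN)
    (hfib : ∀ k, (Finset.univ.filter fun i => fN i = k).card = dims k)
    (G : ∀ t : Fin (l + 1), O (dims t)) (i : Fin n) : Fin (l + ∑ t, (G t).1 + 1) :=
  ⟨stc (cG G) (fN i) +
      ((G (fN i)).2.1 ⟨i.val - stc dims (fN i), idx_sub_lt hmono hfib i⟩).val,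
   IVf_bound hmono hfib G i⟩

lemma IVf_val (hmono : Monotone fN)
    (hfib : ∀ k, (Finset.univ.filter fun i => fN i = k).card = dims k)
    (G : ∀ t : Fin (l + 1), O (dims t)) (i : Fin n) {t : Fin (l + 1)}
    (ht : fN i = t) (j : Fin (dims t)) (hj : i.val = stc dims t + j.val) :
    (IVf hmono hfib G i).val = stc (cG G) t + ((G t).2.1 j).val := by
  subst ht
  show stc (cG G) (fN i) + ((G (fN i)).2.1 ⟨i.val - stc dims (fN i), _⟩).val = _
  have he : (⟨i.val - stc dims (fN i), idx_sub_lt hmono hfib i⟩ : Fin (dims (fN i))) = j :=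
    Fin.ext (by simp only; omega)
  rw [he]

lemma IVf_surj (hmono : Monotone fN)
    (hfib : ∀ k, (Finset.univ.filter fun i => fN i = k).card = dims k)
    (G : ∀ t : Fin (l + 1), O (dims t)) : Function.Surjective (IVf hmono hfib G) := by
  intro x
  have hx : x.val < ∑ t, cG G t := by rw [sum_cG]; exact x.isLt
  obtain ⟨h1, h2⟩ := loc_spec (cG G) hx
  have hy : x.val - stc (cG G) (loc (cG G) x.val) < (G (loc (cG G) x.val)).1 + 1 := by
    simp only [cG] at h2; omega
  obtain ⟨j, hj⟩ := (G (loc (cG G) x.val)).2.2 ⟨x.val - stc (cG G) (loc (cG G) x.val), hy⟩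
  refine ⟨idx hfib (loc (cG G) x.val) j, Fin.ext ?_⟩
  rw [IVf_val hmono hfib G _ (fN_idx hmono hfib _ j) j (by simp only [idx])]
  rw [hj]
  simp only
  omega

lemma IVf_mem (hmono : Monotone fN)
    (hfib : ∀ k, (Finset.univ.filter fun i => fN i = k).card = dims k)
    (G : ∀ t : Fin (l + 1), O (dims t)) (i : Fin n) :
    stc (cG G) (fN i) ≤ (IVf hmono hfib G i).val ∧
      (IVf hmono hfib G i).val < stc (cG G) (fN i) + cG G (fN i) := by
  constructor
  · simp only [IVf]; omega
  · simp only [IVf, cG]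
    have := ((G (fN i)).2.1 ⟨i.val - stc dims (fN i), idx_sub_lt hmono hfib i⟩).isLt
    omega

lemma loc_mono (c : Fin (l + 1) → ℕ) {x y : ℕ} (hxy : x ≤ y) (hy : y < ∑ t, c t) :
    loc c x ≤ loc c y := by
  have hx : x < ∑ t, c t := lt_of_le_of_lt hxy hy
  obtain ⟨hx1, hx2⟩ := loc_spec c hx
  obtain ⟨hy1, hy2⟩ := loc_spec c hy
  by_contra hc
  push_neg at hc
  have := stc_add_le_of_lt c hc
  omega

/-- inverse map, bundled into the subtype -/
noncomputable def IVS (hmono : Monotone fN)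
    (hfib : ∀ k, (Finset.univ.filter fun i => fN i = k).card = dims k)
    (G : ∀ t : Fin (l + 1), O (dims t)) : Sub dims fN hsurj :=
  ⟨⟨l + ∑ t, (G t).1, IVf hmono hfib G, IVf_surj hmono hfib G⟩,
   fun z => loc (cG G) z.val,
   by
    intro z z' hzz
    exact loc_mono (cG G) hzz (by rw [sum_cG]; exact z'.isLt),
   by
    funext i
    show fN i = loc (cG G) (IVf hmono hfib G i).val
    obtain ⟨h1, h2⟩ := IVf_mem hmono hfib G i
    exact (loc_eq (cG G) h1 h2).symm⟩


lemma cG_FW (hmono : Monotone fN)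
    (hfib : ∀ k, (Finset.univ.filter fun i => fN i = k).card = dims k)
    (a : Sub dims fN hsurj) : cG (FW hmono hfib a) = fc (hOf a) := by
  funext t
  simp only [cG, FW]
  have := fcA_pos a t
  omega

lemma left_inv (hmono : Monotone fN)
    (hfib : ∀ k, (Finset.univ.filter fun i => fN i = k).card = dims k)
    (a : Sub dims fN hsurj) : IVS hmono hfib (FW hmono hfib a) = a := by
  apply Subtype.ext
  apply O_ext
  · show l + ∑ t, (FW hmono hfib a t).1 = a.1.1
    have h1 : ∑ t, cG (FW hmono hfib a) t = ∑ t, fc (hOf a) t := by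
      rw [cG_FW hmono hfib a]
    rw [sum_cG] at h1
    have h2 := sum_fcA a
    omega
  · intro i
    show (IVf hmono hfib (FW hmono hfib a) i).val = (a.1.2.1 i).val
    have hmem := (fN_eq_iff hmono hfib (fN i) i).mp rfl
    rw [IVf_val hmono hfib _ i rfl ⟨i.val - stc dims (fN i), idx_sub_lt hmono hfib i⟩
      (by simp only; omega)]
    have hstc : stc (cG (FW hmono hfib a)) (fN i) = stc (fc (hOf a)) (fN i) := by
      rw [cG_FW hmono hfib a]
    rw [hstc]
    have hidx : idx hfib (fN i) ⟨i.val - stc dims (fN i), idx_sub_lt hmono hfib i⟩ = i := by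
      apply Fin.ext
      simp only [idx]
      omega
    show stc (fc (hOf a)) (fN i) +
      ((a.1.2.1 (idx hfib (fN i) _)).val - stc (fc (hOf a)) (fN i)) = _
    rw [hidx]
    have := fA_mem a i
    omega

lemma fc_loc {K : ℕ} (c : Fin (l + 1) → ℕ) (hK : K = ∑ t, c t) (t : Fin (l + 1)) :
    fc (fun z : Fin K => loc c z.val) t = c t := by
  unfold fc
  have he : (univ.filter fun z : Fin K => loc c z.val = t)
      = univ.filter fun z : Fin K => stc c t ≤ z.val ∧ z.val < stc c t + c t := by
    ext z
    simp only [mem_filter, mem_univ, true_and]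
    constructor
    · rintro rfl
      exact loc_spec c (hK ▸ z.isLt)
    · rintro ⟨h1, h2⟩
      exact loc_eq c h1 h2
  rw [he, card_val_interval (hK ▸ stc_add_le_sum c t)]

lemma hOf_IVS (hmono : Monotone fN)
    (hfib : ∀ k, (Finset.univ.filter fun i => fN i = k).card = dims k)
    (G : ∀ t : Fin (l + 1), O (dims t)) :
    hOf (IVS (hsurj := hsurj) hmono hfib G) = fun z => loc (cG G) z.val := by
  apply h_unique (IVS (hsurj := hsurj) hmono hfib G).1.2.2
  have h1 : hOf (IVS (hsurj := hsurj) hmono hfib G) ∘ (IVS (hsurj := hsurj) hmono hfib G).1.2.1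
      = fN := (hOf_fac _).symm
  rw [h1]
  funext i
  show fN i = loc (cG G) ((IVf hmono hfib G i)).val
  obtain ⟨h1, h2⟩ := IVf_mem hmono hfib G i
  exact (loc_eq (cG G) h1 h2).symm

lemma fc_IVS (hmono : Monotone fN)
    (hfib : ∀ k, (Finset.univ.filter fun i => fN i = k).card = dims k)
    (G : ∀ t : Fin (l + 1), O (dims t)) (t : Fin (l + 1)) :
    fc (hOf (IVS (hsurj := hsurj) hmono hfib G)) t = cG G t := by
  rw [hOf_IVS hmono hfib G]
  exact fc_loc (cG G) (by rw [sum_cG]; rfl) t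

lemma right_inv (hmono : Monotone fN)
    (hfib : ∀ k, (Finset.univ.filter fun i => fN i = k).card = dims k)
    (G : ∀ t : Fin (l + 1), O (dims t)) :
    FW hmono hfib (IVS (hsurj := hsurj) hmono hfib G) = G := by
  funext t
  apply O_ext
  · show fc (hOf (IVS (hsurj := hsurj) hmono hfib G)) t - 1 = (G t).1
    rw [fc_IVS hmono hfib G t]
    simp only [cG]
    omega
  · intro j
    show ((IVS (hsurj := hsurj) hmono hfib G).1.2.1 (idx hfib t j)).val -
        stc (fc (hOf (IVS (hsurj := hsurj) hmono hfib G))) t = ((G t).2.1 _).val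
    have hstc : stc (fc (hOf (IVS (hsurj := hsurj) hmono hfib G))) t = stc (cG G) t :=
      Finset.sum_congr rfl fun s _ => fc_IVS hmono hfib G s
    rw [hstc]
    show (IVf hmono hfib G (idx hfib t j)).val - stc (cG G) t = _
    rw [IVf_val hmono hfib G _ (fN_idx hmono hfib t j) j (by simp only [idx])]
    omega


lemma appv_congr {p q : Fin (l + 1) → ℕ} (u : ∀ t, Fin (p t) → Fin (q t))
    {s s' : Fin (l + 1)} (hss : s = s') {x x' : ℕ} (hxx : x = x')
    (hx : x < p s) (hx' : x' < p s') :
    (u s ⟨x, hx⟩).val = (u s' ⟨x', hx'⟩).val := by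
  subst hss; subst hxx; rfl

lemma FW_val (hmono : Monotone fN)
    (hfib : ∀ k, (Finset.univ.filter fun i => fN i = k).card = dims k)
    (a : Sub dims fN hsurj) (t : Fin (l + 1)) (j : Fin (dims t)) {i : Fin n}
    (hi : idx hfib t j = i) :
    ((FW hmono hfib a t).2.1 j).val = (a.1.2.1 i).val - stc (fc (hOf a)) t := by
  subst hi; rfl

lemma FH_pf1 (a : Sub dims fN hsurj) (t : Fin (l + 1)) (x : Fin (fc (hOf a) t - 1 + 1)) :
    stc (fc (hOf a)) t + x.val < a.1.1 + 1 := by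
  have h1 := sum_fcA a
  have h2 := stc_add_le_sum (fc (hOf a)) t
  have h3 := x.isLt
  have h4 := fcA_pos a t
  omega

lemma hcomp_of_le {a b : Sub dims fN hsurj}
    {h₂ : Fin (a.1.1 + 1) → Fin (b.1.1 + 1)} (h₂f : b.1.2.1 = h₂ ∘ a.1.2.1) :
    hOf b ∘ h₂ = hOf a := by
  apply h_unique a.1.2.2
  funext i
  show hOf b (h₂ (a.1.2.1 i)) = hOf a (a.1.2.1 i)
  rw [show h₂ (a.1.2.1 i) = b.1.2.1 i from (congrFun h₂f i).symm, hOf_app b i, hOf_app a i]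

lemma ord_fwd (hmono : Monotone fN)
    (hfib : ∀ k, (Finset.univ.filter fun i => fN i = k).card = dims k)
    (a b : Sub dims fN hsurj) (hab : Ole a.1 b.1) (t : Fin (l + 1)) :
    Ole (FW hmono hfib a t) (FW hmono hfib b t) := by
  obtain ⟨h₂, h₂m, h₂f⟩ := hab
  have hcomp := hcomp_of_le h₂f
  have key : ∀ x : Fin (fc (hOf a) t - 1 + 1),
      stc (fc (hOf b)) t ≤ (h₂ ⟨stc (fc (hOf a)) t + x.val, FH_pf1 a t x⟩).val ∧
      (h₂ ⟨stc (fc (hOf a)) t + x.val, FH_pf1 a t x⟩).val <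
        stc (fc (hOf b)) t + fc (hOf b) t := by
    intro x
    have hz : hOf a ⟨stc (fc (hOf a)) t + x.val, FH_pf1 a t x⟩ = t := by
      rw [eq_iff_of_mono (hOf_mono a)]
      simp only
      have := x.isLt
      have := fcA_pos a t
      omega
    have hb : hOf b (h₂ ⟨stc (fc (hOf a)) t + x.val, FH_pf1 a t x⟩) = t :=
      (congrFun hcomp _).trans hz
    exact (eq_iff_of_mono (hOf_mono b) t _).mp hb
  refine ⟨fun x => ⟨(h₂ ⟨stc (fc (hOf a)) t + x.val, FH_pf1 a t x⟩).val - stc (fc (hOf b)) t,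
      by simp only [FW]; have := (key x).2; have := fcA_pos b t; omega⟩, ?_, ?_⟩
  · intro x y hxy
    simp only [Fin.mk_le_mk]
    have hmle : (⟨stc (fc (hOf a)) t + x.val, FH_pf1 a t x⟩ : Fin (a.1.1 + 1)) ≤
        ⟨stc (fc (hOf a)) t + y.val, FH_pf1 a t y⟩ := by
      rw [Fin.mk_le_mk]
      have := hxy
      rw [Fin.le_def] at this
      omega
    have := h₂m hmle
    rw [Fin.le_def] at this
    omega
  · funext j
    apply Fin.ext
    rw [FW_val hmono hfib b t j rfl]
    show _ = (h₂ ⟨stc (fc (hOf a)) t + ((FW hmono hfib a t).2.1 j).val, _⟩).val -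
      stc (fc (hOf b)) t
    have hmem := fA_mem a (idx hfib t j)
    rw [fN_idx hmono hfib t j] at hmem
    have hinner : (⟨stc (fc (hOf a)) t + ((FW hmono hfib a t).2.1 j).val,
        FH_pf1 a t ((FW hmono hfib a t).2.1 j)⟩ : Fin (a.1.1 + 1)) =
        a.1.2.1 (idx hfib t j) := by
      apply Fin.ext
      simp only
      rw [FW_val hmono hfib a t j rfl]
      omega
    rw [hinner, show h₂ (a.1.2.1 (idx hfib t j)) = b.1.2.1 (idx hfib t j) from
      (congrFun h₂f (idx hfib t j)).symm]

lemma BH_pf1 (a : Sub dims fN hsurj) (z : Fin (a.1.1 + 1)) :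
    z.val - stc (fc (hOf a)) (hOf a z) < fc (hOf a) (hOf a z) - 1 + 1 := by
  have h1 := (eq_iff_of_mono (hOf_mono a) (hOf a z) z).mp rfl
  have h2 := fcA_pos a (hOf a z)
  omega

lemma BH_pf2 (b : Sub dims fN hsurj) (s : Fin (l + 1)) {y : ℕ}
    (hy : y < fc (hOf b) s - 1 + 1) :
    stc (fc (hOf b)) s + y < b.1.1 + 1 := by
  have h1 := sum_fcA b
  have h2 := stc_add_le_sum (fc (hOf b)) s
  have h3 := fcA_pos b s
  omega

/-- glued comparison map, backward direction -/
noncomputable def BH (a b : Sub dims fN hsurj)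
    (ht : ∀ t, Fin (fc (hOf a) t - 1 + 1) → Fin (fc (hOf b) t - 1 + 1))
    (z : Fin (a.1.1 + 1)) : Fin (b.1.1 + 1) :=
  ⟨stc (fc (hOf b)) (hOf a z) +
     (ht (hOf a z) ⟨z.val - stc (fc (hOf a)) (hOf a z), BH_pf1 a z⟩).val,
   BH_pf2 b (hOf a z) (ht (hOf a z) _).isLt⟩

lemma ord_bwd (hmono : Monotone fN)
    (hfib : ∀ k, (Finset.univ.filter fun i => fN i = k).card = dims k)
    (a b : Sub dims fN hsurj)
    (hk : ∀ t, Ole (FW hmono hfib a t) (FW hmono hfib b t)) : Ole a.1 b.1 := by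
  choose ht htm htf using hk
  refine ⟨BH a b ht, ?_, ?_⟩
  · intro z z' hzz
    have hle : hOf a z ≤ hOf a z' := hOf_mono a hzz
    rcases lt_or_eq_of_le hle with hlt | heq
    · show BH a b ht z ≤ BH a b ht z'
      rw [Fin.le_def]
      simp only [BH]
      have h1 : (ht (hOf a z) ⟨z.val - stc (fc (hOf a)) (hOf a z), BH_pf1 a z⟩).val <
          fc (hOf b) (hOf a z) - 1 + 1 := Fin.isLt _
      have h2 := fcA_pos b (hOf a z)
      have h3 := stc_add_le_of_lt (fc (hOf b)) hlt
      omega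
    · show BH a b ht z ≤ BH a b ht z'
      rw [Fin.le_def]
      simp only [BH]
      have hxx : z'.val - stc (fc (hOf a)) (hOf a z') =
          z'.val - stc (fc (hOf a)) (hOf a z) := by rw [heq]
      have hpf : z'.val - stc (fc (hOf a)) (hOf a z) < fc (hOf a) (hOf a z) - 1 + 1 := by
        rw [heq]; exact BH_pf1 a z'
      have e2 : (ht (hOf a z') ⟨z'.val - stc (fc (hOf a)) (hOf a z'), BH_pf1 a z'⟩).val =
          (ht (hOf a z) ⟨z'.val - stc (fc (hOf a)) (hOf a z), hpf⟩).val :=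
        appv_congr ht heq.symm hxx _ _
      erw [e2]; rw [← heq]
      have hmle : (⟨z.val - stc (fc (hOf a)) (hOf a z), BH_pf1 a z⟩ :
          Fin (fc (hOf a) (hOf a z) - 1 + 1)) ≤ ⟨z'.val - stc (fc (hOf a)) (hOf a z), hpf⟩ := by
        rw [Fin.le_def]
        simp only
        rw [Fin.le_def] at hzz
        omega
      have := htm (hOf a z) hmle
      rw [Fin.le_def] at this
      exact Nat.add_le_add_left this _
  · funext i
    apply Fin.ext
    show (b.1.2.1 i).val = (BH a b ht (a.1.2.1 i)).val
    simp only [BH]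
    have hpf : (a.1.2.1 i).val - stc (fc (hOf a)) (fN i) < fc (hOf a) (fN i) - 1 + 1 := by
      have := fA_mem a i
      have := fcA_pos a (fN i)
      omega
    have e2 : (ht (hOf a (a.1.2.1 i)) ⟨(a.1.2.1 i).val -
        stc (fc (hOf a)) (hOf a (a.1.2.1 i)), BH_pf1 a (a.1.2.1 i)⟩).val =
        (ht (fN i) ⟨(a.1.2.1 i).val - stc (fc (hOf a)) (fN i), hpf⟩).val :=
      appv_congr ht (hOf_app a i) (by rw [hOf_app a i]) _ _
    erw [e2]; rw [hOf_app a i]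
    -- use the componentwise factorisation
    have hit := (fN_eq_iff hmono hfib (fN i) i).mp rfl
    have hidx : idx hfib (fN i) ⟨i.val - stc dims (fN i), idx_sub_lt hmono hfib i⟩ = i := by
      apply Fin.ext
      simp only [idx]
      omega
    have h3 := congrFun (htf (fN i)) ⟨i.val - stc dims (fN i), idx_sub_lt hmono hfib i⟩
    have h4 := congrArg Fin.val h3
    rw [FW_val hmono hfib b (fN i) _ hidx] at h4
    simp only [Function.comp] at h4
    have hX : ((FW hmono hfib a (fN i)).2.1 ⟨i.val - stc dims (fN i),
        idx_sub_lt hmono hfib i⟩) = ⟨(a.1.2.1 i).val - stc (fc (hOf a)) (fN i), hpf⟩ := by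
      apply Fin.ext
      rw [FW_val hmono hfib a (fN i) _ hidx]
    rw [hX] at h4
    have hbmem := fA_mem b i
    omega

end Main
end S12

/-- For `𝐧 = (n₁,…,n_l)` a sequence of positive integers
summing to `n`, with `f_𝐧` the monotone surjection with fibre sizes `nₖ`,
the subposet `O_𝐧 = {f ∈ O_n : f ⪯ f_𝐧}` is isomorphic to the product poset
`O_{n₁} × ⋯ × O_{n_l}`. -/
theorem stmt12 (n l : ℕ) (dims : Fin (l + 1) → ℕ) (hd : ∀ k, 0 < dims k)
    (fN : Fin n → Fin (l + 1)) (hmono : Monotone fN) (hsurj : Function.Surjective fN)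
    (hfib : ∀ k, (Finset.univ.filter fun i => fN i = k).card = dims k) :
    ∃ e : {f : O n // Ole f ⟨l, fN, hsurj⟩} ≃ (∀ k : Fin (l + 1), O (dims k)),
      ∀ a b : {f : O n // Ole f ⟨l, fN, hsurj⟩},
        Ole a.1 b.1 ↔ ∀ k, Ole (e a k) (e b k) := by
  refine ⟨⟨S12.FW hmono hfib, S12.IVS hmono hfib, S12.left_inv hmono hfib,
    S12.right_inv hmono hfib⟩, fun a b => ?_⟩
  simp only [Equiv.coe_fn_mk]
  exact ⟨fun hab t => S12.ord_fwd hmono hfib a b hab t,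
    fun hk => S12.ord_bwd hmono hfib a b hk⟩
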